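/- Let G be a topological group acting continuously on topological spaces X and Y, and let k ≥ 1 be an integer. If there exists a continuous G-equivariant map f : X → Y and a continuous map g : Y → X such that f ∘ g is homotopic to the identity of Y, then TC^{G,k}(Y) ≤ TC^{G,k}(X). -/

import Mathlib

open Set

/-- The space of `k`-tuples of paths in `X` that are consecutive up to the `G`-action:
the `(i+1)`-st path starts in the `G`-orbit of the endpoint of the `i`-th path. -/
def effPk (G X : Type*) [Group G] [TopologicalSpace X] [MulAction G X] (k : ℕ) :
    Set (Fin k → C(unitInterval, X)) :=
  {γ | ∀ (i : ℕ) (h : i + 1 < k),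
    γ ⟨i + 1, h⟩ 0 ∈ MulAction.orbit G (γ ⟨i, Nat.lt_of_succ_lt h⟩ 1)}

/-- A `(G,k)`-motion planner on `U ⊆ X × X`: a continuous section over `U` of the map
`π_k` sending a `k`-tuple of consecutive-up-to-`G` paths to its (start, end) pair. -/
def IsEffPlanner (G X : Type*) [Group G] [TopologicalSpace X] [MulAction G X]
    (k : ℕ) (hk : 0 < k) (U : Set (X × X)) : Prop :=
  ∃ s : U → (Fin k → C(unitInterval, X)),
    Continuous s ∧ (∀ u, s u ∈ effPk G X k) ∧
    ∀ u : U, (s u ⟨0, hk⟩) 0 = (u : X × X).1 ∧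
      (s u ⟨k - 1, Nat.sub_lt hk Nat.one_pos⟩) 1 = (u : X × X).2

/-- `TC^{G,k}(X)`: the least `ℓ ≥ 1` such that `X × X` admits an open cover by `ℓ` sets,
each admitting a `(G,k)`-motion planner; `∞` if there is no such `ℓ`. -/
noncomputable def effTC (G X : Type*) [Group G] [TopologicalSpace X] [MulAction G X]
    (k : ℕ) (hk : 0 < k) : ℕ∞ :=
  sInf {ℓ : ℕ∞ | ∃ n : ℕ, ℓ = n ∧ 1 ≤ n ∧
    ∃ U : Fin n → Set (X × X), (∀ i, IsOpen (U i)) ∧ (⋃ i, U i) = Set.univ ∧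
      ∀ i, IsEffPlanner G X k hk (U i)}

/-- Effective topological complexity `TC^{G,∞}(X)`: the minimum of `TC^{G,k}(X)` over `k ≥ 1`. -/
noncomputable def effTCinf (G X : Type*) [Group G] [TopologicalSpace X] [MulAction G X] : ℕ∞ :=
  ⨅ k : ℕ, effTC G X (k + 1) k.succ_pos

/-- Farber's (non-reduced) topological complexity `TC(X)`. -/
noncomputable def farberTC (X : Type*) [TopologicalSpace X] : ℕ∞ :=
  sInf {ℓ : ℕ∞ | ∃ n : ℕ, ℓ = n ∧ 1 ≤ n ∧
    ∃ U : Fin n → Set (X × X), (∀ i, IsOpen (U i)) ∧ (⋃ i, U i) = Set.univ ∧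
      ∀ i, ∃ s : (U i) → C(unitInterval, X), Continuous s ∧
        ∀ u : (U i), (s u) 0 = (u : X × X).1 ∧ (s u) 1 = (u : X × X).2}

open unitInterval

lemma pullback_planner {G : Type*} [Group G]
    {X Y : Type*} [TopologicalSpace X] [TopologicalSpace Y]
    [MulAction G X] [MulAction G Y]
    (f : C(X, Y)) (g : C(Y, X))
    (hf : ∀ (a : G) (x : X), f (a • x) = a • f x)
    (H : ContinuousMap.Homotopy (f.comp g) (ContinuousMap.id Y))
    (k : ℕ) (hk : 1 ≤ k) (U : Set (X × X)) (hU : IsEffPlanner G X k hk U) :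
    IsEffPlanner G Y k hk ((fun p : Y × Y => (g p.1, g p.2)) ⁻¹' U) := by
  classical
  obtain ⟨s, scont, smem, send⟩ := hU
  set V : Set (Y × Y) := (fun p : Y × Y => (g p.1, g p.2)) ⁻¹' U with hVdef
  let φ : V → U := fun v => ⟨(g (v : Y × Y).1, g (v : Y × Y).2), v.2⟩
  have φcont : Continuous φ := by
    apply Continuous.subtype_mk
    exact ((g.continuous.comp continuous_fst).prodMk
      (g.continuous.comp continuous_snd)).comp continuous_subtype_val
  -- the `f`-image of the planner paths
  let base : ∀ (v : V) (i : Fin k), Path (f (s (φ v) i 0)) (f (s (φ v) i 1)) :=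
    fun v i => (Path.mk (s (φ v) i) rfl rfl).map f.continuous
  -- the homotopy path from `f (g y)` to `y`
  let hp : ∀ y : Y, Path (f (g y)) y := fun y =>
    Path.mk ⟨fun t => H (t, y), by fun_prop⟩ (H.apply_zero y) (H.apply_one y)
  have e1 : ∀ v : V, f (s (φ v) ⟨0, hk⟩ 0) = f (g (v : Y × Y).1) :=
    fun v => congrArg f (send (φ v)).1
  have e2 : ∀ v : V, f (s (φ v) ⟨k - 1, Nat.sub_lt hk Nat.one_pos⟩ 1) = f (g (v : Y × Y).2) :=
    fun v => congrArg f (send (φ v)).2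
  let pre : ∀ v : V, Path ((v : Y × Y).1) (f (g (v : Y × Y).1)) := fun v => (hp (v : Y × Y).1).symm
  let post : ∀ v : V, Path (f (g (v : Y × Y).2)) ((v : Y × Y).2) := fun v => hp (v : Y × Y).2
  let s' : V → Fin k → C(unitInterval, Y) := fun v i =>
    if h0 : i = (⟨0, hk⟩ : Fin k) then
      if h1 : i = (⟨k - 1, Nat.sub_lt hk Nat.one_pos⟩ : Fin k) then
        (((pre v).cast rfl (h0 ▸ e1 v)).trans
          ((base v i).trans ((post v).cast (h1 ▸ e2 v) rfl))).toContinuousMap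
      else
        (((pre v).cast rfl (h0 ▸ e1 v)).trans (base v i)).toContinuousMap
    else
      if h1 : i = (⟨k - 1, Nat.sub_lt hk Nat.one_pos⟩ : Fin k) then
        ((base v i).trans ((post v).cast (h1 ▸ e2 v) rfl)).toContinuousMap
      else
        (base v i).toContinuousMap
  have base_unc : ∀ i : Fin k, Continuous ↿(fun v => base v i) := by
    intro i
    have h1 : Continuous fun v : V => s (φ v) i :=
      (continuous_apply i).comp (scont.comp φcont)
    have : Continuous fun p : V × unitInterval => s (φ p.1) i p.2 :=
      (ContinuousEval.continuous_eval.comp ((h1.comp continuous_fst).prodMk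
        continuous_snd))
    exact f.continuous.comp this
  have pre_unc : Continuous ↿(fun v => pre v) := by
    show Continuous fun p : V × unitInterval => H (σ p.2, (p.1 : Y × Y).1)
    exact H.continuous.comp ((continuous_symm.comp continuous_snd).prodMk
      (continuous_fst.comp (continuous_subtype_val.comp continuous_fst)))
  have post_unc : Continuous ↿(fun v => post v) := by
    show Continuous fun p : V × unitInterval => H (p.2, (p.1 : Y × Y).2)
    exact H.continuous.comp (continuous_snd.prodMk
      (continuous_snd.comp (continuous_subtype_val.comp continuous_fst)))
  refine ⟨s', ?_, ?_, ?_⟩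
  · -- continuity
    apply continuous_pi
    intro i
    by_cases h0 : i = (⟨0, hk⟩ : Fin k)
    · by_cases h1 : i = (⟨k - 1, Nat.sub_lt hk Nat.one_pos⟩ : Fin k)
      · have hfun : (fun v => s' v i) = fun v =>
            (((pre v).cast rfl (show f ((s (φ v)) i 0) = f (g (↑v : Y × Y).1) by rw [h0]; exact e1 v)).trans
              ((base v i).trans ((post v).cast (show f ((s (φ v)) i 1) = f (g (↑v : Y × Y).2) by rw [h1]; exact e2 v) rfl))).toContinuousMap := by
          funext v; simp only [s']; rw [dif_pos h0, dif_pos h1]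
        rw [hfun]
        apply ContinuousMap.continuous_of_continuous_uncurry
        exact Path.trans_continuous_family
          (fun v => (pre v).cast rfl (show f ((s (φ v)) i 0) = f (g (↑v : Y × Y).1) by rw [h0]; exact e1 v)) pre_unc
          (fun v => (base v i).trans ((post v).cast (show f ((s (φ v)) i 1) = f (g (↑v : Y × Y).2) by rw [h1]; exact e2 v) rfl))
          (Path.trans_continuous_family (fun v => base v i) (base_unc i)
            (fun v => (post v).cast (show f ((s (φ v)) i 1) = f (g (↑v : Y × Y).2) by rw [h1]; exact e2 v) rfl) post_unc)
      · have hfun : (fun v => s' v i) = fun v =>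
            (((pre v).cast rfl (show f ((s (φ v)) i 0) = f (g (↑v : Y × Y).1) by rw [h0]; exact e1 v)).trans (base v i)).toContinuousMap := by
          funext v; simp only [s']; rw [dif_pos h0, dif_neg h1]
        rw [hfun]
        apply ContinuousMap.continuous_of_continuous_uncurry
        exact Path.trans_continuous_family
          (fun v => (pre v).cast rfl (show f ((s (φ v)) i 0) = f (g (↑v : Y × Y).1) by rw [h0]; exact e1 v)) pre_unc
          (fun v => base v i) (base_unc i)
    · by_cases h1 : i = (⟨k - 1, Nat.sub_lt hk Nat.one_pos⟩ : Fin k)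
      · have hfun : (fun v => s' v i) = fun v =>
            ((base v i).trans ((post v).cast (show f ((s (φ v)) i 1) = f (g (↑v : Y × Y).2) by rw [h1]; exact e2 v) rfl)).toContinuousMap := by
          funext v; simp only [s']; rw [dif_neg h0, dif_pos h1]
        rw [hfun]
        apply ContinuousMap.continuous_of_continuous_uncurry
        exact Path.trans_continuous_family (fun v => base v i) (base_unc i)
          (fun v => (post v).cast (show f ((s (φ v)) i 1) = f (g (↑v : Y × Y).2) by rw [h1]; exact e2 v) rfl) post_unc
      · have hfun : (fun v => s' v i) = fun v => (base v i).toContinuousMap := by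
          funext v; simp only [s']; rw [dif_neg h0, dif_neg h1]
        rw [hfun]
        apply ContinuousMap.continuous_of_continuous_uncurry
        exact base_unc i
  · -- membership in effPk
    intro v i h
    have hi0 : (⟨i + 1, h⟩ : Fin k) ≠ (⟨0, hk⟩ : Fin k) := by
      simp [Fin.ext_iff]
    have hi1 : (⟨i, Nat.lt_of_succ_lt h⟩ : Fin k)
        ≠ (⟨k - 1, Nat.sub_lt hk Nat.one_pos⟩ : Fin k) := by
      simp only [Fin.ext_iff, ne_eq]
      omega
    have hv0 : s' v ⟨i + 1, h⟩ 0 = f (s (φ v) ⟨i + 1, h⟩ 0) := by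
      simp only [s']
      split_ifs
      all_goals first
        | exact Path.source _
        | exact Path.target _
        | simp_all
    have hv1 : s' v ⟨i, Nat.lt_of_succ_lt h⟩ 1
        = f (s (φ v) ⟨i, Nat.lt_of_succ_lt h⟩ 1) := by
      simp only [s']
      split_ifs
      all_goals first
        | exact Path.source _
        | exact Path.target _
        | simp_all
    rw [hv0, hv1]
    obtain ⟨a, ha⟩ := smem (φ v) i h
    exact MulAction.mem_orbit_iff.mpr ⟨a, by rw [← hf]; exact congrArg f ha⟩
  · -- endpoints
    intro v
    constructor
    · simp only [s']
      split_ifs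
      all_goals first
        | exact Path.source _
        | exact Path.target _
        | simp_all
    · simp only [s']
      split_ifs
      all_goals first
        | exact Path.source _
        | exact Path.target _
        | simp_all

/-- If `f : X → Y` is a continuous `G`-equivariant map and `g : Y → X` is a
continuous map with `f ∘ g` homotopic to the identity of `Y`, then
`TC^{G,k}(Y) ≤ TC^{G,k}(X)` for every `k ≥ 1`. -/
theorem effTC_le_of_domination {G : Type*} [Group G] [TopologicalSpace G] [IsTopologicalGroup G]
    {X Y : Type*} [TopologicalSpace X] [TopologicalSpace Y]
    [MulAction G X] [MulAction G Y] [ContinuousSMul G X] [ContinuousSMul G Y]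
    (f : C(X, Y)) (g : C(Y, X))
    (hf : ∀ (a : G) (x : X), f (a • x) = a • f x)
    (hfg : (f.comp g).Homotopic (ContinuousMap.id Y))
    (k : ℕ) (hk : 1 ≤ k) :
    effTC G Y k hk ≤ effTC G X k hk := by
  obtain ⟨H⟩ := hfg
  apply sInf_le_sInf
  rintro ℓ ⟨n, rfl, hn, U, hopen, hcover, hplan⟩
  refine ⟨n, rfl, hn, fun i => (fun p : Y × Y => (g p.1, g p.2)) ⁻¹' (U i), ?_, ?_, ?_⟩
  · intro i
    exact (hopen i).preimage ((g.continuous.comp continuous_fst).prodMk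
      (g.continuous.comp continuous_snd))
  · apply Set.eq_univ_of_forall
    intro p
    have : (g p.1, g p.2) ∈ ⋃ i, U i := hcover ▸ Set.mem_univ _
    obtain ⟨i, hi⟩ := Set.mem_iUnion.mp this
    exact Set.mem_iUnion.mpr ⟨i, hi⟩
  · intro i
    exact pullback_planner f g hf H k hk (U i) (hplan i)
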